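/- Let K : ℝ × ℝ → ℝ be continuously differentiable with ∂₁K(x,y) = −∂₁K(y,x) for all x, y. Fix x ∈ ℝ and assume: the functions y ↦ K(x,y)·K(y,x) and y ↦ ∂₁K(x,y)·∫_x^y K(x,t) dt are Lebesgue integrable on ℝ; ∫_ℝ K(x,y)·K(y,x) dy = K(x,x) (projection/reproducing property); K(y,x) → 0 as y → ±∞; and K(y,x)·∫_x^y K(x,t) dt → 0 as y → ±∞. Then ∫_ℝ det𝕂₁(x,y) dy = K(x,x), the integral of the sign term being understood as the sum of the improper integrals over (−∞, x] and [x, ∞). -/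

import Mathlib

open MeasureTheory Filter

theorem stmt_11 (K : ℝ → ℝ → ℝ)
    (hK : ContDiff ℝ 1 fun p : ℝ × ℝ => K p.1 p.2)
    (hskew : ∀ x y : ℝ, deriv (fun t => K t y) x = - deriv (fun t => K t x) y)
    (x : ℝ)
    (hint1 : Integrable fun y => K x y * K y x)
    (hint2 : Integrable fun y => deriv (fun t => K t y) x * ∫ t in x..y, K x t)
    (hproj : (∫ y : ℝ, K x y * K y x) = K x x)
    (hlim1 : Tendsto (fun y => K y x) atTop (nhds 0))
    (hlim1' : Tendsto (fun y => K y x) atBot (nhds 0))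
    (hlim2 : Tendsto (fun y => K y x * ∫ t in x..y, K x t) atTop (nhds 0))
    (hlim2' : Tendsto (fun y => K y x * ∫ t in x..y, K x t) atBot (nhds 0)) :
    -- `∫_ℝ det𝕂₁(x,y) dy = K(x,x)`, where the integral of the sign term
    -- `(1/2)·sgn(x−y)·∂₁K(x,y)` is understood as the sum of the improper
    -- integrals over `(−∞, x]` and `[x, ∞)`.
    ∃ Am Ap : ℝ,
      Tendsto (fun a : ℝ =>
          ∫ y in a..x, (1/2) * Real.sign (x - y) * deriv (fun t => K t y) x)
        atBot (nhds Am) ∧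
      Tendsto (fun b : ℝ =>
          ∫ y in x..b, (1/2) * Real.sign (x - y) * deriv (fun t => K t y) x)
        atTop (nhds Ap) ∧
      (∫ y : ℝ, (K x y * K y x + deriv (fun t => K t y) x * ∫ t in x..y, K x t))
          + (Am + Ap) = K x x := by
  
  have hKdiff : Differentiable ℝ (fun p : ℝ × ℝ => K p.1 p.2) := hK.differentiable one_ne_zero
  set L : ℝ × ℝ → (ℝ × ℝ) →L[ℝ] ℝ := fderiv ℝ (fun p : ℝ × ℝ => K p.1 p.2) with hLdef
  have hline : ∀ b t : ℝ, HasDerivAt (fun s : ℝ => ((s, b) : ℝ × ℝ)) ((1:ℝ), (0:ℝ)) t :=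
    fun b t => (hasDerivAt_id t).prodMk (hasDerivAt_const t b)
  have hD : ∀ a b : ℝ, HasDerivAt (fun t => K t b) (L (a, b) (1, 0)) a := by
    intro a b
    exact ((hKdiff (a, b)).hasFDerivAt.comp_hasDerivAt a (hline b a))
  set d : ℝ → ℝ := fun y => deriv (fun t => K t y) x with hddef
  have hdval : ∀ y, d y = L (x, y) (1, 0) := fun y => (hD x y).deriv
  have hdcont : Continuous d := by
    have h1 : Continuous L := hK.continuous_fderiv one_ne_zero
    have : Continuous fun y : ℝ => L (x, y) (1, 0) :=
      (h1.comp (continuous_const.prodMk continuous_id)).clm_apply continuous_const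
    exact this.congr fun y => (hdval y).symm
  set g : ℝ → ℝ := fun y => K y x with hgdef
  have hg : ∀ y, HasDerivAt g (- d y) y := by
    intro y
    have h1 : HasDerivAt g (L (y, x) (1, 0)) y := hD y x
    have h2 : d y = - L (y, x) (1, 0) := by
      rw [hddef]; simp only [hskew x y]
      rw [(hD y x).deriv]
    rw [h2, neg_neg]; exact h1
  set F : ℝ → ℝ := fun y => ∫ t in x..y, K x t with hFdef
  have hKxcont : Continuous fun t => K x t :=
    hK.continuous.comp (continuous_const.prodMk continuous_id)
  have hF : ∀ y, HasDerivAt F (K x y) y := by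
    intro y
    exact intervalIntegral.integral_hasDerivAt_right
      (hKxcont.intervalIntegrable x y)
      (hKxcont.stronglyMeasurableAtFilter _ _)
      hKxcont.continuousAt
  -- the product h = g * F
  have hh : ∀ y, HasDerivAt (fun y => g y * F y) ((- d y) * F y + g y * K x y) y :=
    fun y => (hg y).mul (hF y)
  have hh'int : Integrable fun y => (- d y) * F y + g y * K x y := by
    apply Integrable.add
    · have := hint2.neg
      exact this.congr (Filter.Eventually.of_forall fun y => by simp [neg_mul]; rfl)
    · exact hint1.congr (Filter.Eventually.of_forall fun y => mul_comm _ _)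
  have hinth' : (∫ y : ℝ, ((- d y) * F y + g y * K x y)) = 0 - 0 :=
    integral_of_hasDerivAt_of_tendsto hh hh'int hlim2' hlim2
  have hint2val : (∫ y : ℝ, d y * F y) = K x x := by
    rw [integral_add (hint2.neg.congr (Filter.Eventually.of_forall fun y => by
        simp [neg_mul]; rfl)) (hint1.congr (Filter.Eventually.of_forall fun y => mul_comm _ _))]
      at hinth'
    have h1 : (∫ y : ℝ, (- d y) * F y) = - ∫ y : ℝ, d y * F y := by
      simp [neg_mul, integral_neg]
    have h2 : (∫ y : ℝ, g y * K x y) = K x x := by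
      rw [← hproj]; congr 1; ext y; rw [mul_comm]
    rw [h1, h2] at hinth'
    linarith
  -- main integral value
  have hmain : (∫ y : ℝ, (K x y * K y x + d y * F y)) = K x x + K x x := by
    rw [integral_add hint1 hint2, hproj, hint2val]
  -- interval integral computation
  have hIntd : ∀ a b : ℝ, (∫ y in a..b, d y) = - (g b - g a) := by
    intro a b
    have : (∫ y in a..b, - d y) = g b - g a :=
      intervalIntegral.integral_eq_sub_of_hasDerivAt (fun y _ => hg y)
        (hdcont.neg.intervalIntegrable a b)
    rw [intervalIntegral.integral_neg] at this
    linarith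
  -- Am side
  have hAm : Tendsto (fun a : ℝ =>
      ∫ y in a..x, (1/2) * Real.sign (x - y) * d y) atBot (nhds (-(1/2) * K x x)) := by
    have heq : ∀ᶠ a in atBot, (∫ y in a..x, (1/2) * Real.sign (x - y) * d y)
        = (1/2) * (K a x - K x x) := by
      filter_upwards [eventually_le_atBot x] with a ha
      have h1 : (∫ y in a..x, (1/2) * Real.sign (x - y) * d y)
          = ∫ y in a..x, (1/2) * d y := by
        apply intervalIntegral.integral_congr_ae
        have hx : {(x : ℝ)}ᶜ ∈ (ae (volume : Measure ℝ)) :=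
          compl_mem_ae_iff.2 (measure_singleton x)
        filter_upwards [hx] with y hy hyI
        have hyx : y < x := by
          rcases lt_or_eq_of_le (by
            have := hyI; rw [Set.uIoc_of_le ha] at this; exact this.2) with h | h
          · exact h
          · exact absurd h hy
        rw [Real.sign_of_pos (by linarith : (0:ℝ) < x - y), mul_one]
      rw [h1, intervalIntegral.integral_const_mul, hIntd]
      simp only [hgdef]; ring
    apply Tendsto.congr' (Filter.EventuallyEq.symm heq)
    have : Tendsto (fun a : ℝ => (1/2) * (K a x - K x x)) atBot
        (nhds ((1/2) * (0 - K x x))) :=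
      (tendsto_const_nhds.mul ((hlim1'.sub tendsto_const_nhds)))
    simpa using this
  -- Ap side
  have hAp : Tendsto (fun b : ℝ =>
      ∫ y in x..b, (1/2) * Real.sign (x - y) * d y) atTop (nhds (-(1/2) * K x x)) := by
    have heq : ∀ᶠ b in atTop, (∫ y in x..b, (1/2) * Real.sign (x - y) * d y)
        = (1/2) * (K b x - K x x) := by
      filter_upwards [eventually_ge_atTop x] with b hb
      have h1 : (∫ y in x..b, (1/2) * Real.sign (x - y) * d y)
          = ∫ y in x..b, -(1/2) * d y := by
        apply intervalIntegral.integral_congr_ae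
        filter_upwards with y hyI
        have hyx : x < y := by
          rw [Set.uIoc_of_le hb] at hyI; exact hyI.1
        rw [Real.sign_of_neg (by linarith : x - y < 0)]
        ring
      rw [h1, intervalIntegral.integral_const_mul, hIntd]
      simp only [hgdef]; ring
    apply Tendsto.congr' (Filter.EventuallyEq.symm heq)
    have : Tendsto (fun b : ℝ => (1/2) * (K b x - K x x)) atTop
        (nhds ((1/2) * (0 - K x x))) :=
      (tendsto_const_nhds.mul ((hlim1.sub tendsto_const_nhds)))
    simpa using this
  refine ⟨-(1/2) * K x x, -(1/2) * K x x, hAm, hAp, ?_⟩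
  rw [hmain]; ring
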